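/- Let X be a finite nonempty type, let L be a finite nonempty index set with finite nonempty types (X_l)_{l∈L}, and let ψ : X × Π_{l∈L} X_l → ℝ be nonnegative. For each l ∈ L let S_l be a finite set of measures on X_l, and suppose that for every choice (s_l)_{l∈L} with s_l ∈ S_l, ∑_{x∈X} ∑_{y ∈ Π_l X_l} ψ(x,y) ∏_{l∈L} s_l(y_l) > 0. For a choice (φ_l)_{l∈L} of measures φ_l on X_l, let m_{(φ_l)} denote the normalization of the function x ↦ ∑_{y} ψ(x,y) ∏_{l∈L} φ_l(y_l). Then for every x ∈ X, the supremum of m_{(φ_l)}(x) over all choices with φ_l ∈ convexHull(S_l) for each l equals the supremum of m_{(s_l)}(x) over all choices with s_l ∈ S_l for each l, and likewise for the infimum. -/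

import Mathlib

private lemma lin_coord {L : Type*} [Fintype L] [DecidableEq L]
    (Xl : L → Type*) [∀ l, Fintype (Xl l)]
    (c : (∀ l, Xl l) → ℝ)
    (l₀ : L) (φ : ∀ l, Xl l → ℝ) (T : Finset (Xl l₀ → ℝ)) (w : (Xl l₀ → ℝ) → ℝ)
    (hw : φ l₀ = ∑ v ∈ T, w v • v) :
    ∑ y, c y * ∏ l, φ l (y l)
      = ∑ v ∈ T, w v * ∑ y, c y * ∏ l, Function.update φ l₀ v l (y l) := by
  have hupd : ∀ (v : Xl l₀ → ℝ) (y : ∀ l, Xl l),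
      ∏ l, Function.update φ l₀ v l (y l)
        = v (y l₀) * ∏ l ∈ Finset.univ.erase l₀, φ l (y l) := by
    intro v y
    rw [← Finset.mul_prod_erase Finset.univ (fun l => Function.update φ l₀ v l (y l))
      (Finset.mem_univ l₀), Function.update_self]
    congr 1
    exact Finset.prod_congr rfl fun l hl => by
      rw [Function.update_of_ne (Finset.ne_of_mem_erase hl)]
  calc ∑ y, c y * ∏ l, φ l (y l)
      = ∑ y, ∑ v ∈ T, w v * (c y * ∏ l, Function.update φ l₀ v l (y l)) := by
        refine Finset.sum_congr rfl fun y _ => ?_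
        rw [← Finset.mul_prod_erase Finset.univ (fun l => φ l (y l)) (Finset.mem_univ l₀)]
        simp only [hupd, hw, Finset.sum_apply, Pi.smul_apply, smul_eq_mul]
        rw [Finset.sum_mul, Finset.mul_sum]
        exact Finset.sum_congr rfl fun v _ => by ring
    _ = ∑ v ∈ T, w v * ∑ y, c y * ∏ l, Function.update φ l₀ v l (y l) := by
        rw [Finset.sum_comm]
        exact Finset.sum_congr rfl fun v _ => by rw [Finset.mul_sum]

private lemma key_ineq {X : Type*} [Fintype X] {L : Type*} [Fintype L] [DecidableEq L]
    (Xl : L → Type*) [∀ l, Fintype (Xl l)]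
    (ψ : X × (∀ l, Xl l) → ℝ)
    (S : ∀ l, Finset (Xl l → ℝ))
    (c d : ℝ) (x : X)
    (hbase : ∀ s : ∀ l, Xl l → ℝ, (∀ l, s l ∈ S l) →
       0 < (∑ x', ∑ y, ψ (x', y) * ∏ l, s l (y l)) ∧
       (∑ y, ψ (x, y) * ∏ l, s l (y l)) ≤ c * ∑ x', ∑ y, ψ (x', y) * ∏ l, s l (y l) ∧
       d * (∑ x', ∑ y, ψ (x', y) * ∏ l, s l (y l)) ≤ ∑ y, ψ (x, y) * ∏ l, s l (y l))
    (t : Finset L) (φ : ∀ l, Xl l → ℝ)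
    (hφ : ∀ l, φ l ∈ convexHull ℝ (S l : Set (Xl l → ℝ)))
    (hout : ∀ l ∉ t, φ l ∈ S l) :
    0 < (∑ x', ∑ y, ψ (x', y) * ∏ l, φ l (y l)) ∧
    (∑ y, ψ (x, y) * ∏ l, φ l (y l)) ≤ c * ∑ x', ∑ y, ψ (x', y) * ∏ l, φ l (y l) ∧
    d * (∑ x', ∑ y, ψ (x', y) * ∏ l, φ l (y l)) ≤ ∑ y, ψ (x, y) * ∏ l, φ l (y l) := by
  classical
  induction t using Finset.induction generalizing φ with
  | empty => exact hbase φ fun l => hout l (Finset.notMem_empty l)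
  | @insert a t ha ih =>
    have hmema := hφ a
    rw [Finset.convexHull_eq] at hmema
    obtain ⟨w, hw0, hw1, hwc⟩ := hmema
    have hrep : φ a = ∑ v ∈ S a, w v • v := by
      rw [← hwc, Finset.centerMass_eq_of_sum_1 _ id hw1]; rfl
    -- updated tuples
    have hmem : ∀ v ∈ S a, ∀ l, Function.update φ a v l ∈ convexHull ℝ (S l : Set (Xl l → ℝ)) := by
      intro v hv l
      rcases eq_or_ne l a with rfl | h
      · rw [Function.update_self]; exact subset_convexHull ℝ _ (by exact_mod_cast hv)
      · rw [Function.update_of_ne h]; exact hφ l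
    have hout' : ∀ v ∈ S a, ∀ l ∉ t, Function.update φ a v l ∈ S l := by
      intro v hv l hl
      rcases eq_or_ne l a with rfl | h
      · rwa [Function.update_self]
      · rw [Function.update_of_ne h]
        exact hout l (by simp [Finset.mem_insert, h, hl])
    have IH := fun v (hv : v ∈ S a) => ih (Function.update φ a v) (hmem v hv) (hout' v hv)
    -- linearity
    have linA : ∑ y, ψ (x, y) * ∏ l, φ l (y l)
        = ∑ v ∈ S a, w v * ∑ y, ψ (x, y) * ∏ l, Function.update φ a v l (y l) :=
      lin_coord Xl _ a φ (S a) w hrep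
    have linB : (∑ x', ∑ y, ψ (x', y) * ∏ l, φ l (y l))
        = ∑ v ∈ S a, w v * ∑ x', ∑ y, ψ (x', y) * ∏ l, Function.update φ a v l (y l) := by
      rw [show (∑ x', ∑ y, ψ (x', y) * ∏ l, φ l (y l))
          = ∑ x', ∑ v ∈ S a, w v * ∑ y, ψ (x', y) * ∏ l, Function.update φ a v l (y l) from
        Finset.sum_congr rfl fun x' _ => lin_coord Xl _ a φ (S a) w hrep,
        Finset.sum_comm]
      exact Finset.sum_congr rfl fun v _ => (Finset.mul_sum _ _ _).symm
    have hwex : ∃ v ∈ S a, 0 < w v := by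
      by_contra hcon
      push_neg at hcon
      have : ∑ v ∈ S a, w v ≤ 0 := Finset.sum_nonpos hcon
      linarith [hw1]
    refine ⟨?_, ?_, ?_⟩
    · rw [linB]
      obtain ⟨v, hv, hvpos⟩ := hwex
      exact Finset.sum_pos' (fun v hv => mul_nonneg (hw0 v hv) (IH v hv).1.le)
        ⟨v, hv, mul_pos hvpos (IH v hv).1⟩
    · rw [linA, linB, Finset.mul_sum]
      exact Finset.sum_le_sum fun v hv => by
        rw [← mul_assoc, mul_comm c (w v), mul_assoc]
        exact mul_le_mul_of_nonneg_left (IH v hv).2.1 (hw0 v hv)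
    · rw [linA, linB, Finset.mul_sum]
      exact Finset.sum_le_sum fun v hv => by
        rw [← mul_assoc, mul_comm d (w v), mul_assoc]
        exact mul_le_mul_of_nonneg_left (IH v hv).2.2 (hw0 v hv)

set_option maxHeartbeats 1000000 in
/-- Corollary of the product lemma: the extrema of the normalized marginal over
choices `φ l ∈ convexHull (S l)` coincide with those over choices `s l ∈ S l`. -/
theorem stmt_8 {X : Type*} [Fintype X] [Nonempty X]
    {L : Type*} [Fintype L] [DecidableEq L] [Nonempty L]
    (Xl : L → Type*) [∀ l, Fintype (Xl l)] [∀ l, Nonempty (Xl l)]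
    (ψ : X × (∀ l, Xl l) → ℝ) (hψ : ∀ z, 0 ≤ ψ z)
    (S : ∀ l, Finset (Xl l → ℝ))
    (hS : ∀ l, ∀ f ∈ S l, ∀ xl, 0 ≤ f xl)
    (hpos : ∀ s : ∀ l, Xl l → ℝ, (∀ l, s l ∈ S l) →
      0 < ∑ x, ∑ y, ψ (x, y) * ∏ l, s l (y l)) :
    ∀ x : X,
      (sSup {r : ℝ | ∃ φ : ∀ l, Xl l → ℝ,
            (∀ l, φ l ∈ convexHull ℝ ((S l : Set (Xl l → ℝ)))) ∧
            r = (∑ y, ψ (x, y) * ∏ l, φ l (y l))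
                / ∑ x', ∑ y, ψ (x', y) * ∏ l, φ l (y l)}
        = sSup {r : ℝ | ∃ s : ∀ l, Xl l → ℝ, (∀ l, s l ∈ S l) ∧
            r = (∑ y, ψ (x, y) * ∏ l, s l (y l))
                / ∑ x', ∑ y, ψ (x', y) * ∏ l, s l (y l)}) ∧
      (sInf {r : ℝ | ∃ φ : ∀ l, Xl l → ℝ,
            (∀ l, φ l ∈ convexHull ℝ ((S l : Set (Xl l → ℝ)))) ∧
            r = (∑ y, ψ (x, y) * ∏ l, φ l (y l))
                / ∑ x', ∑ y, ψ (x', y) * ∏ l, φ l (y l)}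
        = sInf {r : ℝ | ∃ s : ∀ l, Xl l → ℝ, (∀ l, s l ∈ S l) ∧
            r = (∑ y, ψ (x, y) * ∏ l, s l (y l))
                / ∑ x', ∑ y, ψ (x', y) * ∏ l, s l (y l)}) := by
  intro x
  classical
  by_cases hne : ∀ l, (S l).Nonempty
  · -- main case
    set H : Set ℝ := {r : ℝ | ∃ φ : ∀ l, Xl l → ℝ,
        (∀ l, φ l ∈ convexHull ℝ ((S l : Set (Xl l → ℝ)))) ∧
        r = (∑ y, ψ (x, y) * ∏ l, φ l (y l))
            / ∑ x', ∑ y, ψ (x', y) * ∏ l, φ l (y l)} with hH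
    set V : Set ℝ := {r : ℝ | ∃ s : ∀ l, Xl l → ℝ, (∀ l, s l ∈ S l) ∧
        r = (∑ y, ψ (x, y) * ∏ l, s l (y l))
            / ∑ x', ∑ y, ψ (x', y) * ∏ l, s l (y l)} with hV
    have hVIcc : V ⊆ Set.Icc 0 1 := by
      rintro r ⟨s, hs, rfl⟩
      have hB := hpos s hs
      have hA : 0 ≤ ∑ y, ψ (x, y) * ∏ l, s l (y l) :=
        Finset.sum_nonneg fun y _ => mul_nonneg (hψ _)
          (Finset.prod_nonneg fun l _ => hS l _ (hs l) _)
      have hAB : (∑ y, ψ (x, y) * ∏ l, s l (y l))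
          ≤ ∑ x', ∑ y, ψ (x', y) * ∏ l, s l (y l) :=
        Finset.single_le_sum (f := fun x' => ∑ y, ψ (x', y) * ∏ l, s l (y l))
          (fun x' _ => Finset.sum_nonneg fun y _ =>
          mul_nonneg (hψ _) (Finset.prod_nonneg fun l _ => hS l _ (hs l) _))
          (Finset.mem_univ x)
      exact ⟨div_nonneg hA hB.le, (div_le_one hB).2 hAB⟩
    have hVbdda : BddAbove V := ⟨1, fun r hr => (hVIcc hr).2⟩
    have hVbddb : BddBelow V := ⟨0, fun r hr => (hVIcc hr).1⟩
    set c := sSup V with hc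
    set d := sInf V with hd
    choose s0 hs0 using hne
    have hVne : V.Nonempty :=
      ⟨_, s0, hs0, rfl⟩
    have hbase : ∀ s : ∀ l, Xl l → ℝ, (∀ l, s l ∈ S l) →
        0 < (∑ x', ∑ y, ψ (x', y) * ∏ l, s l (y l)) ∧
        (∑ y, ψ (x, y) * ∏ l, s l (y l)) ≤ c * ∑ x', ∑ y, ψ (x', y) * ∏ l, s l (y l) ∧
        d * (∑ x', ∑ y, ψ (x', y) * ∏ l, s l (y l)) ≤ ∑ y, ψ (x, y) * ∏ l, s l (y l) := by
      intro s hs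
      have hB := hpos s hs
      have hmem : (∑ y, ψ (x, y) * ∏ l, s l (y l))
          / (∑ x', ∑ y, ψ (x', y) * ∏ l, s l (y l)) ∈ V := ⟨s, hs, rfl⟩
      refine ⟨hB, ?_, ?_⟩
      · have := le_csSup hVbdda hmem
        rwa [div_le_iff₀ hB] at this
      · have := csInf_le hVbddb hmem
        rw [le_div_iff₀ hB] at this
        linarith
    have key : ∀ φ : ∀ l, Xl l → ℝ,
        (∀ l, φ l ∈ convexHull ℝ (S l : Set (Xl l → ℝ))) →
        0 < (∑ x', ∑ y, ψ (x', y) * ∏ l, φ l (y l)) ∧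
        (∑ y, ψ (x, y) * ∏ l, φ l (y l)) ≤ c * ∑ x', ∑ y, ψ (x', y) * ∏ l, φ l (y l) ∧
        d * (∑ x', ∑ y, ψ (x', y) * ∏ l, φ l (y l)) ≤ ∑ y, ψ (x, y) * ∏ l, φ l (y l) :=
      fun φ hφ => key_ineq Xl ψ S c d x hbase Finset.univ φ hφ
        (fun l hl => absurd (Finset.mem_univ l) hl)
    have hHdc : ∀ r ∈ H, d ≤ r ∧ r ≤ c := by
      rintro r ⟨φ, hφ, rfl⟩
      obtain ⟨hB, hAc, hdA⟩ := key φ hφ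
      exact ⟨(le_div_iff₀ hB).2 (by linarith), (div_le_iff₀ hB).2 hAc⟩
    have hVH : V ⊆ H := by
      rintro r ⟨s, hs, rfl⟩
      exact ⟨s, fun l => subset_convexHull ℝ _ (by exact_mod_cast hs l), rfl⟩
    have hHne : H.Nonempty := hVne.mono hVH
    have hHbdda : BddAbove H := ⟨c, fun r hr => (hHdc r hr).2⟩
    have hHbddb : BddBelow H := ⟨d, fun r hr => (hHdc r hr).1⟩
    constructor
    · exact le_antisymm (csSup_le hHne fun r hr => (hHdc r hr).2)
        (csSup_le_csSup hHbdda hVne hVH)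
    · exact le_antisymm (csInf_le_csInf hHbddb hVne hVH)
        (le_csInf hHne fun r hr => (hHdc r hr).1)
  · -- some S l is empty
    push_neg at hne
    obtain ⟨l₀, hl₀⟩ := hne
    have hH : {r : ℝ | ∃ φ : ∀ l, Xl l → ℝ,
        (∀ l, φ l ∈ convexHull ℝ ((S l : Set (Xl l → ℝ)))) ∧
        r = (∑ y, ψ (x, y) * ∏ l, φ l (y l))
            / ∑ x', ∑ y, ψ (x', y) * ∏ l, φ l (y l)} = (∅ : Set ℝ) := by
      ext r
      simp only [Set.mem_setOf_eq, Set.mem_empty_iff_false, iff_false, not_exists]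
      rintro φ ⟨hφ, -⟩
      have h2 := hφ l₀
      rw [hl₀, Finset.coe_empty, convexHull_empty] at h2
      exact h2
    have hV : {r : ℝ | ∃ s : ∀ l, Xl l → ℝ, (∀ l, s l ∈ S l) ∧
        r = (∑ y, ψ (x, y) * ∏ l, s l (y l))
            / ∑ x', ∑ y, ψ (x', y) * ∏ l, s l (y l)} = (∅ : Set ℝ) := by
      ext r
      simp only [Set.mem_setOf_eq, Set.mem_empty_iff_false, iff_false, not_exists]
      rintro s ⟨hs, -⟩
      exact absurd (hs l₀) (by rw [hl₀]; exact Finset.notMem_empty _)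
    rw [hH, hV]
    exact ⟨rfl, rfl⟩
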